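/- Let γ₁₁, γ₁₂, γ₂₂, h, m¹, m², b : ℝ² → ℝ be differentiable with γ(x) ≠ 0 and h(x) ≠ 0 for all x (γ := γ₁₁γ₂₂ − γ₁₂²), and let g ∈ ℝ. Define the stress tensor T^{ij} = m^i m^j / h + ½ g h² γ^{ij} and the source S^i = −g h Σ_j γ^{ij} ∂_j b. Then the first momentum balance operator of the shallow water system on a manifold admits the flux/nonconservative splitting: at every point, Σ_j ∂_j T^{1j} + Σ_{j,k} Γ¹_{jk} T^{kj} + Σ_{j,k} Γ^j_{jk} T^{1k} − S¹ = ∂₁((m¹)²/h) + ∂₂(m¹m²/h) + (1/γ)[ g h γ₂₂ (∂₁h + ∂₁b) + ((m¹)²γ₂₂/h) ∂₁γ₁₁ − (2(m¹)²γ₁₂/h) ∂₁γ₁₂ − (1/(2h))(2m¹m²γ₁₂ + (m²)²γ₂₂ − (m¹)²γ₁₁) ∂₁γ₂₂ ] + (1/γ)[ −g h γ₁₂ (∂₂h + ∂₂b) + (m¹/(2h))(3m²γ₂₂ + m¹γ₁₂) ∂₂γ₁₁ + (m²/h)(m²γ₂₂ − m¹γ₁₂) ∂₂γ₁₂ + (m²/(2h))(m¹γ₁₁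 − m²γ₁₂) ∂₂γ₂₂ ]. -/

import Mathlib

open Real

noncomputable section

/-- Partial derivative in direction `j` (j = 0 ↦ ∂₁, j = 1 ↦ ∂₂) of a scalar
function on ℝ². -/
def pd (j : Fin 2) (f : ℝ × ℝ → ℝ) (x : ℝ × ℝ) : ℝ :=
  fderiv ℝ f x (if j = 0 then ((1 : ℝ), (0 : ℝ)) else ((0 : ℝ), (1 : ℝ)))

/-- Covariant components of the symmetric metric tensor (γ₂₁ = γ₁₂). -/
def gcov (g11 g12 g22 : ℝ × ℝ → ℝ) : Fin 2 → Fin 2 → ℝ × ℝ → ℝ :=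
  fun i j => !![g11, g12; g12, g22] i j

/-- Determinant γ = γ₁₁γ₂₂ − γ₁₂² of the metric. -/
def gdet (g11 g12 g22 : ℝ × ℝ → ℝ) (x : ℝ × ℝ) : ℝ :=
  g11 x * g22 x - g12 x ^ 2

/-- Contravariant (inverse) components of the metric:
γ^{11} = γ₂₂/γ, γ^{12} = γ^{21} = −γ₁₂/γ, γ^{22} = γ₁₁/γ. -/
def gcon (g11 g12 g22 : ℝ × ℝ → ℝ) : Fin 2 → Fin 2 → ℝ × ℝ → ℝ :=
  fun i j =>
    !![fun x => g22 x / gdet g11 g12 g22 x,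
       fun x => -g12 x / gdet g11 g12 g22 x;
       fun x => -g12 x / gdet g11 g12 g22 x,
       fun x => g11 x / gdet g11 g12 g22 x] i j

/-- Christoffel symbols
Γ^i_{jk} = ½ Σ_m γ^{im} (∂_j γ_{km} + ∂_k γ_{jm} − ∂_m γ_{jk}). -/
def Gamma (g11 g12 g22 : ℝ × ℝ → ℝ) (i j k : Fin 2) (x : ℝ × ℝ) : ℝ :=
  (1 / 2) * ∑ m : Fin 2, gcon g11 g12 g22 i m x *
    (pd j (gcov g11 g12 g22 k m) x + pd k (gcov g11 g12 g22 j m) x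
      - pd m (gcov g11 g12 g22 j k) x)

/-- Stress tensor T^{ij} = m^i m^j / h + ½ g h² γ^{ij}. -/
def stress (g11 g12 g22 h m1 m2 : ℝ × ℝ → ℝ) (g : ℝ) (i j : Fin 2)
    (y : ℝ × ℝ) : ℝ :=
  ![m1, m2] i y * ![m1, m2] j y / h y
    + (1 / 2) * g * h y ^ 2 * gcon g11 g12 g22 i j y

/-- Source S^i = −g h Σ_j γ^{ij} ∂_j b. -/
def source (g11 g12 g22 h b : ℝ × ℝ → ℝ) (g : ℝ) (i : Fin 2) (x : ℝ × ℝ) : ℝ :=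
  -(g * h x * ∑ j : Fin 2, gcon g11 g12 g22 i j x * pd j b x)

section pdlemmas
variable {f g : ℝ × ℝ → ℝ} {x : ℝ × ℝ} {j : Fin 2}

lemma pd_add (hf : DifferentiableAt ℝ f x) (hg : DifferentiableAt ℝ g x) :
    pd j (fun y => f y + g y) x = pd j f x + pd j g x := by
  simp [pd, fderiv_fun_add hf hg]

lemma pd_sub (hf : DifferentiableAt ℝ f x) (hg : DifferentiableAt ℝ g x) :
    pd j (fun y => f y - g y) x = pd j f x - pd j g x := by
  simp [pd, fderiv_fun_sub hf hg]

lemma pd_mul (hf : DifferentiableAt ℝ f x) (hg : DifferentiableAt ℝ g x) :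
    pd j (fun y => f y * g y) x = pd j f x * g x + f x * pd j g x := by
  simp [pd, fderiv_fun_mul hf hg]; ring

lemma pd_inv (hg : DifferentiableAt ℝ g x) (hgx : g x ≠ 0) :
    pd j (fun y => (g y)⁻¹) x = -pd j g x / g x ^ 2 := by
  have H := (hasDerivAt_inv hgx).comp_hasFDerivAt x hg.hasFDerivAt
  have H2 : HasFDerivAt (fun y => (g y)⁻¹) (-(g x ^ 2)⁻¹ • fderiv ℝ g x) x := H
  rw [pd, H2.fderiv]
  simp [pd]
  ring

lemma pd_div (hf : DifferentiableAt ℝ f x) (hg : DifferentiableAt ℝ g x)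
    (hgx : g x ≠ 0) :
    pd j (fun y => f y / g y) x = (pd j f x * g x - f x * pd j g x) / g x ^ 2 := by
  have h1 : (fun y => f y / g y) = fun y => f y * (g y)⁻¹ := by
    funext y; rw [div_eq_mul_inv]
  rw [h1, pd_mul (g := fun y => (g y)⁻¹) hf (hg.inv hgx), pd_inv hg hgx]
  field_simp
  ring

lemma pd_sq (hf : DifferentiableAt ℝ f x) :
    pd j (fun y => f y ^ 2) x = 2 * f x * pd j f x := by
  have h1 : (fun y => f y ^ 2) = fun y => f y * f y := by funext y; ring
  rw [h1, pd_mul hf hf]; ring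

lemma pd_const (c : ℝ) : pd j (fun _ => c) x = 0 := by simp [pd]

lemma pd_const_mul (c : ℝ) (hf : DifferentiableAt ℝ f x) :
    pd j (fun y => c * f y) x = c * pd j f x := by
  simp [pd, fderiv_const_mul hf]

lemma pd_neg (hg : DifferentiableAt ℝ g x) :
    pd j (fun y => -g y) x = -pd j g x := by
  simp [pd, fderiv_neg]
end pdlemmas

set_option maxHeartbeats 2000000 in
/-- flux/nonconservative splitting of the first momentum balance
operator of the shallow water system on a manifold. -/
theorem first_momentum_balance_splitting
    (g11 g12 g22 h m1 m2 b : ℝ × ℝ → ℝ) (g : ℝ)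
    (h11 : Differentiable ℝ g11) (h12 : Differentiable ℝ g12)
    (h22 : Differentiable ℝ g22) (hh : Differentiable ℝ h)
    (hm1 : Differentiable ℝ m1) (hm2 : Differentiable ℝ m2)
    (hb : Differentiable ℝ b)
    (hγ : ∀ x, gdet g11 g12 g22 x ≠ 0) (hhne : ∀ x, h x ≠ 0) :
    ∀ x : ℝ × ℝ,
      (∑ j : Fin 2, pd j (fun y => stress g11 g12 g22 h m1 m2 g 0 j y) x)
        + (∑ j : Fin 2, ∑ k : Fin 2, Gamma g11 g12 g22 0 j k x *
            stress g11 g12 g22 h m1 m2 g k j x)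
        + (∑ j : Fin 2, ∑ k : Fin 2, Gamma g11 g12 g22 j j k x *
            stress g11 g12 g22 h m1 m2 g 0 k x)
        - source g11 g12 g22 h b g 0 x
      = pd 0 (fun y => m1 y ^ 2 / h y) x + pd 1 (fun y => m1 y * m2 y / h y) x
        + (1 / gdet g11 g12 g22 x) *
            (g * h x * g22 x * (pd 0 h x + pd 0 b x)
              + (m1 x ^ 2 * g22 x / h x) * pd 0 g11 x
              - (2 * m1 x ^ 2 * g12 x / h x) * pd 0 g12 x
              - (1 / (2 * h x)) *
                  (2 * m1 x * m2 x * g12 x + m2 x ^ 2 * g22 x - m1 x ^ 2 * g11 x)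
                  * pd 0 g22 x)
        + (1 / gdet g11 g12 g22 x) *
            (-(g * h x * g12 x) * (pd 1 h x + pd 1 b x)
              + (m1 x / (2 * h x)) * (3 * m2 x * g22 x + m1 x * g12 x) * pd 1 g11 x
              + (m2 x / h x) * (m2 x * g22 x - m1 x * g12 x) * pd 1 g12 x
              + (m2 x / (2 * h x)) * (m1 x * g11 x - m2 x * g12 x) * pd 1 g22 x) := by
  intro x
  have hhx : h x ≠ 0 := hhne x
  have hγx : g11 x * g22 x - g12 x ^ 2 ≠ 0 := hγ x
  have e1 : (fun y => stress g11 g12 g22 h m1 m2 g 0 0 y)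
      = fun y => m1 y * m1 y / h y
          + 1 / 2 * g * h y ^ 2 * g22 y / (g11 y * g22 y - g12 y ^ 2) := by
    funext y; simp [stress, gcon, gdet]; ring
  have e2 : (fun y => stress g11 g12 g22 h m1 m2 g 0 1 y)
      = fun y => m1 y * m2 y / h y
          + -(1 / 2 * g * h y ^ 2 * g12 y) / (g11 y * g22 y - g12 y ^ 2) := by
    funext y; simp [stress, gcon, gdet]; ring
  have e3 : (fun y => m1 y ^ 2 / h y) = fun y => m1 y * m1 y / h y := by
    funext y; ring
  simp only [Fin.sum_univ_two, e1, e2, e3]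
  simp only [_root_.Gamma, stress, source, gcov, gcon, gdet, Fin.sum_univ_two,
    Matrix.cons_val', Matrix.of_apply, Matrix.cons_val_zero, Matrix.cons_val_one, Matrix.head_cons,
    Matrix.empty_val', Matrix.cons_val_fin_one, Matrix.head_fin_const,
    Matrix.cons_val_fin_one]
  simp (disch := first
      | exact hhx
      | exact hγx
      | (try simp only [div_eq_mul_inv]
         fun_prop (disch := first | exact hhx | exact hγx))) only
    [pd_add, pd_sub, pd_div, pd_mul, pd_sq, pd_neg, pd_const_mul, pd_const]
  have hγ1 : g22 x * g11 x - g12 x ^ 2 ≠ 0 := by rw [mul_comm]; exact hγx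
  have hγ2 : -g12 x ^ 2 + g11 x * g22 x ≠ 0 := by rw [neg_add_eq_sub]; exact hγx
  field_simp [hγ1, hγ2]
  ring
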